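/- In the rational function field ℚ(s, g), set x = s²(g−1)²(g+s²)(s²g+1)/(s²−1)² and y = (1/2)·s²(g²−1)(g+s²)(s²g+1)(2g²s² + g(s⁴−6s²+1) + 2s²)/(s²−1)³. Then y² = x³ + (1/4)g²(s⁴ + 14s² + 1)x² + s²g³(g + s²)(gs² + 1)x. -/
import Mathlib


/-- The rational function field `ℚ(s, g)`. -/
noncomputable abbrev QsgField : Type := FractionRing (MvPolynomial (Fin 2) ℚ)

/-- The transcendental element `s` of `ℚ(s, g)`. -/
noncomputable def sElt : QsgField :=
  algebraMap (MvPolynomial (Fin 2) ℚ) QsgField (MvPolynomial.X 0)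

/-- The transcendental element `g` of `ℚ(s, g)`. -/
noncomputable def gElt : QsgField :=
  algebraMap (MvPolynomial (Fin 2) ℚ) QsgField (MvPolynomial.X 1)

set_option maxHeartbeats 4000000 in
/-- Section 3.3 of the paper: the stated point is a rational point of fibration #9
`y² = x³ + ¼g²(s⁴ + 14s² + 1)x² + s²g³(g + s²)(gs² + 1)x` over `ℚ(s, g)`. -/
theorem stmt10 (x y : QsgField)
    (hx : x = sElt ^ 2 * (gElt - 1) ^ 2 * (gElt + sElt ^ 2) * (sElt ^ 2 * gElt + 1)
        / (sElt ^ 2 - 1) ^ 2)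
    (hy : y = (1 / 2) * (sElt ^ 2 * (gElt ^ 2 - 1) * (gElt + sElt ^ 2) * (sElt ^ 2 * gElt + 1)
          * (2 * gElt ^ 2 * sElt ^ 2 + gElt * (sElt ^ 4 - 6 * sElt ^ 2 + 1) + 2 * sElt ^ 2))
        / (sElt ^ 2 - 1) ^ 3) :
    y ^ 2 = x ^ 3 + (1 / 4) * gElt ^ 2 * (sElt ^ 4 + 14 * sElt ^ 2 + 1) * x ^ 2
      + sElt ^ 2 * gElt ^ 3 * (gElt + sElt ^ 2) * (gElt * sElt ^ 2 + 1) * x := by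
  have hinj : Function.Injective (algebraMap (MvPolynomial (Fin 2) ℚ) QsgField) :=
    IsFractionRing.injective _ _
  have hs : sElt ^ 2 - 1 ≠ 0 := by
    have : (MvPolynomial.X 0 : MvPolynomial (Fin 2) ℚ) ^ 2 - 1 ≠ 0 := by
      intro h
      have := congrArg (MvPolynomial.eval (fun _ => (2 : ℚ))) h
      norm_num at this
    intro h
    apply this
    apply hinj
    simpa [sElt, map_sub, map_pow, map_one] using h
  subst hx hy
  field_simp [hs]
  ring
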